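/- In the single-queue boarding game, if a Nash equilibrium policy T exists that is differentiable and strictly decreasing, then it is unique and given by T(v) = g⁻¹( N · ∫_v^B (1/n(x)) dG(x) ). -/

import Mathlib

open MeasureTheory Set

lemma cont_G (μ : Measure ℝ) [IsFiniteMeasure μ] [NullSingletonClass μ] (v : ℝ) :
    Continuous fun x => (μ (Ioc v x)).toReal := by
  rw [Metric.continuous_iff]
  intro b ε hε
  have h1 : Filter.Tendsto (fun δ => (μ (Icc (b - δ) (b + δ))).toReal) (nhds 0) (nhds 0) := by
    have h := _root_.tendsto_measure_Icc μ b
    simpa [Function.comp_def] using (ENNReal.tendsto_toReal (by simp)).comp h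
  have h2 : ∀ᶠ δ in nhds (0:ℝ), (μ (Icc (b - δ) (b + δ))).toReal < ε := by
    have := h1.eventually (gt_mem_nhds hε)
    simpa using this
  obtain ⟨δ', hδ', hball⟩ := Metric.eventually_nhds_iff.1 h2
  refine ⟨δ'/2, by positivity, fun y hy => ?_⟩
  have hc : (μ (Icc (b - δ'/2) (b + δ'/2))).toReal < ε := by
    apply hball; rw [Real.dist_eq, sub_zero, abs_of_pos (by positivity)]; linarith
  have key : ∀ s t : ℝ, s ≤ t → dist t b < δ'/2 → dist s b < δ'/2 →
      (μ (Ioc v t)).toReal - (μ (Ioc v s)).toReal < ε := by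
    intro s t hst hd1 hd2
    rw [Real.dist_eq, abs_lt] at hd1 hd2
    have hsub : Ioc v t ⊆ Ioc v s ∪ Icc (b - δ'/2) (b + δ'/2) := by
      intro x hx
      rcases le_or_gt x s with h | h
      · exact Or.inl ⟨hx.1, h⟩
      · exact Or.inr ⟨by linarith [hx.2], by linarith [hx.2]⟩
    have := measure_mono (μ := μ) hsub
    have h3 := (this.trans (measure_union_le _ _))
    have h4 : (μ (Ioc v t)).toReal ≤ (μ (Ioc v s)).toReal +
        (μ (Icc (b - δ'/2) (b + δ'/2))).toReal := by
      rw [← ENNReal.toReal_add (measure_ne_top μ _) (measure_ne_top μ _)]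
      exact ENNReal.toReal_mono (by simp [ENNReal.add_ne_top, measure_ne_top]) h3
    linarith
  rw [Real.dist_eq, abs_lt]
  have hmono : ∀ s t : ℝ, s ≤ t → (μ (Ioc v s)).toReal ≤ (μ (Ioc v t)).toReal :=
    fun s t hst => ENNReal.toReal_mono (measure_ne_top μ _) (measure_mono (Ioc_subset_Ioc_right hst))
  rcases le_or_gt y b with h | h
  · constructor
    · have := key y b h (by simp [dist_self]; positivity) hy
      linarith
    · have := hmono y b h; linarith
  · constructor
    · have := hmono b y h.le; linarith
    · have := key b y h.le hy (by simp [dist_self]; positivity)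
      linarith

set_option maxHeartbeats 2000000 in
lemma stmt3_aux (A B N : ℝ) (hAB : A ≤ B) (hN : 0 < N)
    (μ : Measure ℝ) [IsProbabilityMeasure μ] [NullSingletonClass μ]
    (hsupp : μ (Icc A B) = 1)
    (n g F T : ℝ → ℝ)
    (hn : StrictMonoOn n (Icc A B))
    (hnpos : ∀ v ∈ Icc A B, 0 < n v)
    (hgmono : StrictMonoOn g (Ici 0))
    (hgcont : Continuous g)
    (hgdiff : ∀ t ∈ Ici (0:ℝ), DifferentiableAt ℝ g t)
    (hg0 : g 0 = 0)
    (hInt : IntegrableOn (fun x => (n x)⁻¹) (Icc A B) μ)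
    (hTnonneg : ∀ v ∈ Icc A B, 0 ≤ T v)
    (hTanti : StrictAntiOn T (Icc A B))
    (hTdiff : ∀ v ∈ Icc A B, DifferentiableAt ℝ T v)
    (hF : ∀ t, F t = (μ {x ∈ Icc A B | t ≤ T x}).toReal)
    (hNE : ∀ v ∈ Icc A B, ∀ t, 0 ≤ t →
      N * F (T v) + n v * g (T v) ≤ N * F t + n v * g t) :
    ∀ v ∈ Icc A B, g (T v) = N * ∫ x in Ioc v B, (n x)⁻¹ ∂μ := by
  have hBmem : B ∈ Icc A B := ⟨hAB, le_refl B⟩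
  -- F ∘ T is the cdf
  have hFT : ∀ a ∈ Icc A B, F (T a) = (μ (Icc A a)).toReal := by
    intro a ha
    rw [hF]
    have hset : {x | x ∈ Icc A B ∧ T a ≤ T x} = Icc A a := by
      ext x
      simp only [mem_setOf_eq, mem_Icc]
      constructor
      · rintro ⟨⟨h1, h2⟩, h3⟩
        refine ⟨h1, ?_⟩
        by_contra h
        push_neg at h
        have := hTanti ha ⟨h1, h2⟩ h
        linarith
      · rintro ⟨h1, h2⟩
        have hx : x ∈ Icc A B := ⟨h1, h2.trans ha.2⟩
        refine ⟨⟨h1, hx.2⟩, ?_⟩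
        rcases eq_or_lt_of_le h2 with h | h
        · rw [h]
        · exact (hTanti hx ha h).le
      
    rw [hset]
  -- cdf increments
  have measEq : ∀ a b : ℝ, a ∈ Icc A B → a ≤ b →
      (μ (Icc A b)).toReal = (μ (Icc A a)).toReal + (μ (Ioc a b)).toReal := by
    intro a b ha hab
    rw [← Icc_union_Ioc_eq_Icc ha.1 hab, measure_union ?_ measurableSet_Ioc,
      ENNReal.toReal_add (measure_ne_top μ _) (measure_ne_top μ _)]
    rw [Set.disjoint_left]
    rintro x ⟨_, hx2⟩ ⟨hx3, _⟩
    linarith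
  -- the key two-point estimate
  have key : ∀ a b : ℝ, a ∈ Icc A B → b ∈ Icc A B → a ≤ b →
      |g (T a) - g (T b) - N * ∫ x in Ioc a b, (n x)⁻¹ ∂μ| ≤
        N * (μ (Ioc a b)).toReal * ((n a)⁻¹ - (n b)⁻¹) := by
    intro a b ha hb hab
    set m := (μ (Ioc a b)).toReal with hm
    have hm0 : 0 ≤ m := ENNReal.toReal_nonneg
    have hna := hnpos a ha
    have hnb := hnpos b hb
    have e1 := hNE a ha (T b) (hTnonneg b hb)
    have e2 := hNE b hb (T a) (hTnonneg a ha)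
    rw [hFT a ha, hFT b hb] at e1 e2
    have hGm := measEq a b ha hab
    have i1 : g (T a) - g (T b) ≤ N * m * (n a)⁻¹ := by
      have h : g (T a) - g (T b) ≤ N * m / n a :=
        (le_div_iff₀ hna).2 (by nlinarith [e1])
      rwa [div_eq_mul_inv] at h
    have i2 : N * m * (n b)⁻¹ ≤ g (T a) - g (T b) := by
      have h : N * m / n b ≤ g (T a) - g (T b) :=
        (div_le_iff₀ hnb).2 (by nlinarith [e2])
      rwa [div_eq_mul_inv] at h
    have hsub : Ioc a b ⊆ Icc A B := fun x hx => ⟨ha.1.trans hx.1.le, hx.2.trans hb.2⟩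
    have hIab : IntegrableOn (fun x => (n x)⁻¹) (Ioc a b) μ := hInt.mono_set hsub
    have hconst : ∀ c : ℝ, IntegrableOn (fun _ => c) (Ioc a b) μ :=
      fun c => integrableOn_const (measure_ne_top μ _)
    have iu : ∫ x in Ioc a b, (n x)⁻¹ ∂μ ≤ m * (n a)⁻¹ := by
      have h := setIntegral_mono_on hIab (hconst ((n a)⁻¹)) measurableSet_Ioc
        (fun x hx => by
          have hx' : x ∈ Icc A B := hsub hx
          exact inv_anti₀ hna (hn.monotoneOn ha hx' hx.1.le))
      rwa [setIntegral_const, smul_eq_mul] at h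
    have il : m * (n b)⁻¹ ≤ ∫ x in Ioc a b, (n x)⁻¹ ∂μ := by
      have h := setIntegral_mono_on (hconst ((n b)⁻¹)) hIab measurableSet_Ioc
        (fun x hx => by
          have hx' : x ∈ Icc A B := hsub hx
          have := hn.monotoneOn hx' hb hx.2
          exact inv_anti₀ (hnpos x hx') this)
      rwa [setIntegral_const, smul_eq_mul] at h
    rw [abs_le]
    constructor
    · nlinarith [mul_le_mul_of_nonneg_left iu hN.le]
    · nlinarith [mul_le_mul_of_nonneg_left il hN.le]
  -- g (T B) = 0
  have hgTB : g (T B) = 0 := by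
    have hF0 : F 0 = 1 := by
      rw [hF]
      have hset : {x | x ∈ Icc A B ∧ (0:ℝ) ≤ T x} = Icc A B := by
        ext x
        simp only [mem_setOf_eq, and_iff_left_iff_imp]
        exact fun hx => hTnonneg x hx
      rw [hset, hsupp]
      simp
    have hFTB : F (T B) = 1 := by rw [hFT B hBmem, hsupp]; simp
    have h := hNE B hBmem 0 le_rfl
    rw [hF0, hFTB, hg0] at h
    have hnB := hnpos B hBmem
    have h1 : g (T B) ≤ 0 := by nlinarith
    have h2 : 0 ≤ g (T B) := by
      rw [← hg0]
      exact hgmono.monotoneOn (mem_Ici.2 le_rfl) (mem_Ici.2 (hTnonneg B hBmem))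
        (hTnonneg B hBmem)
    linarith
  intro v hv
  obtain ⟨Gv, hGvdef⟩ : ∃ G : ℝ → ℝ, G = fun x => (μ (Ioc v x)).toReal := ⟨_, rfl⟩
  have hGvcont : Continuous Gv := by rw [hGvdef]; exact cont_G μ v
  have hGv0 : Gv v = 0 := by rw [hGvdef]; simp
  have hGvmono : ∀ s t : ℝ, s ≤ t → Gv s ≤ Gv t := by
    rw [hGvdef]
    exact fun s t hst =>
      ENNReal.toReal_mono (measure_ne_top μ _) (measure_mono (Ioc_subset_Ioc_right hst))
  -- decomposition of Gv
  have decomp : ∀ a b : ℝ, v ≤ a → a ≤ b → Gv b = Gv a + (μ (Ioc a b)).toReal := by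
    intro a b hva hab
    have : Ioc v a ∪ Ioc a b = Ioc v b := Ioc_union_Ioc_eq_Ioc hva hab
    rw [hGvdef]
    simp only
    rw [← this, measure_union ?_ measurableSet_Ioc,
      ENNReal.toReal_add (measure_ne_top μ _) (measure_ne_top μ _)]
    rw [Set.disjoint_left]
    rintro x ⟨_, hx2⟩ ⟨hx3, _⟩
    linarith
  -- integral decomposition
  have intdecomp : ∀ a b : ℝ, v ≤ a → a ≤ b → b ≤ B →
      ∫ x in Ioc v b, (n x)⁻¹ ∂μ =
        (∫ x in Ioc v a, (n x)⁻¹ ∂μ) + ∫ x in Ioc a b, (n x)⁻¹ ∂μ := by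
    intro a b hva hab hbB
    have hsub : ∀ s t : ℝ, v ≤ s → t ≤ B → Ioc s t ⊆ Icc A B := by
      intro s t hs ht x hx
      exact ⟨hv.1.trans (hs.trans hx.1.le), hx.2.trans ht⟩
    have hu : Ioc v a ∪ Ioc a b = Ioc v b := Ioc_union_Ioc_eq_Ioc hva hab
    rw [← hu, setIntegral_union ?_ measurableSet_Ioc
      (hInt.mono_set (hsub v a le_rfl (hab.trans hbB)))
      (hInt.mono_set (hsub a b hva hbB))]
    rw [Set.disjoint_left]
    rintro x ⟨_, hx2⟩ ⟨hx3, _⟩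
    linarith
  have hnv := hnpos v hv
  -- the per-k bound
  have hk_bound : ∀ k : ℕ, 0 < k →
      |g (T v) - N * ∫ x in Ioc v B, (n x)⁻¹ ∂μ| ≤ N * (n v)⁻¹ / k := by
    intro k hk
    have hkR : (0:ℝ) < k := by exact_mod_cast hk
    have hrhs : (0:ℝ) ≤ N * (n v)⁻¹ / k := by positivity
    obtain ⟨L, hL⟩ : ∃ L : ℝ, L = Gv B := ⟨_, rfl⟩
    have hL0 : 0 ≤ L := by rw [hL, ← hGv0]; exact hGvmono v B hv.2
    have hL1 : L ≤ 1 := by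
      rw [hL, hGvdef]
      have h1 : (μ (Ioc v B)).toReal ≤ (μ (univ : Set ℝ)).toReal :=
        ENNReal.toReal_mono (measure_ne_top μ _) (measure_mono (subset_univ _))
      simpa using h1
    rcases eq_or_lt_of_le hL0 with hL0' | hLpos
    · -- degenerate case : μ (Ioc v B) = 0
      have hμ0 : μ (Ioc v B) = 0 := by
        have h2 : (μ (Ioc v B)).toReal = 0 := by
          rw [hL, hGvdef] at hL0'; exact hL0'.symm
        rcases (ENNReal.toReal_eq_zero_iff _).1 h2 with h | h
        · exact h
        · exact absurd h (measure_ne_top μ _)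
      have hint0 : ∫ x in Ioc v B, (n x)⁻¹ ∂μ = 0 := setIntegral_measure_zero _ hμ0
      have hkey := key v B hv hBmem hv.2
      rw [show (μ (Ioc v B)).toReal = 0 from by rw [hμ0]; simp, hint0, hgTB] at hkey
      rw [hint0]
      simp only [mul_zero, zero_mul, sub_zero] at hkey ⊢
      linarith [abs_nonneg (g (T v))]
    · obtain ⟨c, hc⟩ : ∃ c : ℝ, c = L / k := ⟨_, rfl⟩
      have hcpos : 0 < c := by rw [hc]; exact div_pos hLpos hkR
      have hGvB : Gv B = (k:ℝ) * c := by
        rw [← hL, hc]; field_simp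
      have hex : ∀ i : ℕ, ∃ x, x ∈ Icc v B ∧ Gv x = ((min i k : ℕ) : ℝ) * c := by
        intro i
        have hmem : ((min i k : ℕ) : ℝ) * c ∈ Icc (Gv v) (Gv B) := by
          rw [mem_Icc, hGv0, hGvB]
          constructor
          · positivity
          · have h1 : ((min i k : ℕ):ℝ) ≤ (k:ℝ) := by exact_mod_cast min_le_right i k
            nlinarith
        obtain ⟨x, hx1, hx2⟩ := intermediate_value_Icc hv.2 hGvcont.continuousOn hmem
        exact ⟨x, hx1, hx2⟩
      choose p hp1 hp2 using hex
      have hpmem : ∀ i, p i ∈ Icc A B := fun i => ⟨hv.1.trans (hp1 i).1, (hp1 i).2⟩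
      have hpG : ∀ i, i ≤ k → Gv (p i) = (i : ℝ) * c := by
        intro i hi; rw [hp2 i, min_eq_left hi]
      have hord : ∀ i j : ℕ, i < j → j ≤ k → p i ≤ p j := by
        intro i j hij hjk
        by_contra h
        push_neg at h
        have h1 := hGvmono (p j) (p i) h.le
        rw [hpG i (le_of_lt (lt_of_lt_of_le hij hjk)), hpG j hjk] at h1
        have h2 : (i:ℝ) < j := by exact_mod_cast hij
        nlinarith
      have hpc : ∀ i : ℕ, i < k → (μ (Ioc (p i) (p (i+1)))).toReal = c := by
        intro i hi
        have h1 := decomp (p i) (p (i+1)) (hp1 i).1 (hord i (i+1) (Nat.lt_succ_self i) hi)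
        rw [hpG i hi.le, hpG (i+1) hi] at h1
        push_cast at h1
        linarith
      have claim : ∀ i : ℕ, i ≤ k →
          |g (T v) - g (T (p i)) - N * ∫ x in Ioc v (p i), (n x)⁻¹ ∂μ| ≤
            N * c * ((n v)⁻¹ - (n (p i))⁻¹) := by
        intro i
        induction i with
        | zero =>
          intro _
          have h0 : (μ (Ioc v (p 0))).toReal = 0 := by
            have := hpG 0 (Nat.zero_le k)
            rw [hGvdef] at this
            simpa using this
          have hμ0 : μ (Ioc v (p 0)) = 0 := by
            rcases (ENNReal.toReal_eq_zero_iff _).1 h0 with h | h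
            · exact h
            · exact absurd h (measure_ne_top μ _)
          have hkey := key v (p 0) hv (hpmem 0) (hp1 0).1
          rw [show (μ (Ioc v (p 0))).toReal = 0 from by rw [hμ0]; simp] at hkey
          have hmono : n v ≤ n (p 0) := hn.monotoneOn hv (hpmem 0) (hp1 0).1
          have hinv : (n (p 0))⁻¹ ≤ (n v)⁻¹ := inv_anti₀ hnv hmono
          have hinv0 : (0:ℝ) ≤ (n (p 0))⁻¹ := (inv_pos.2 (hnpos _ (hpmem 0))).le
          have hrhs0 : (0:ℝ) ≤ N * c * ((n v)⁻¹ - (n (p 0))⁻¹) :=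
            mul_nonneg (mul_nonneg hN.le hcpos.le) (sub_nonneg.2 hinv)
          simp only [mul_zero, zero_mul] at hkey
          linarith
        | succ i ih =>
          intro hik
          have hik' : i < k := hik
          have hle : p i ≤ p (i+1) := hord i (i+1) (Nat.lt_succ_self i) hik
          have hid := intdecomp (p i) (p (i+1)) (hp1 i).1 hle (hp1 (i+1)).2
          have hkey := key (p i) (p (i+1)) (hpmem i) (hpmem (i+1)) hle
          rw [hpc i hik'] at hkey
          have hih := ih hik'.le
          calc |g (T v) - g (T (p (i+1))) - N * ∫ x in Ioc v (p (i+1)), (n x)⁻¹ ∂μ|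
              = |(g (T v) - g (T (p i)) - N * ∫ x in Ioc v (p i), (n x)⁻¹ ∂μ) +
                (g (T (p i)) - g (T (p (i+1))) -
                  N * ∫ x in Ioc (p i) (p (i+1)), (n x)⁻¹ ∂μ)| := by
                rw [hid]; ring_nf
            _ ≤ |g (T v) - g (T (p i)) - N * ∫ x in Ioc v (p i), (n x)⁻¹ ∂μ| +
                |g (T (p i)) - g (T (p (i+1))) -
                  N * ∫ x in Ioc (p i) (p (i+1)), (n x)⁻¹ ∂μ| := abs_add_le _ _
            _ ≤ N * c * ((n v)⁻¹ - (n (p (i+1)))⁻¹) := by linarith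
      have hc2 := claim k le_rfl
      have hμ0 : μ (Ioc (p k) B) = 0 := by
        have h1 := decomp (p k) B (hp1 k).1 (hp1 k).2
        rw [hpG k le_rfl, hGvB] at h1
        have h2 : (μ (Ioc (p k) B)).toReal = 0 := by linarith
        rcases (ENNReal.toReal_eq_zero_iff _).1 h2 with h | h
        · exact h
        · exact absurd h (measure_ne_top μ _)
      have hint0 : ∫ x in Ioc (p k) B, (n x)⁻¹ ∂μ = 0 := setIntegral_measure_zero _ hμ0
      have hkey := key (p k) B (hpmem k) hBmem (hp1 k).2
      rw [show (μ (Ioc (p k) B)).toReal = 0 from by rw [hμ0]; simp, hint0, hgTB] at hkey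
      have hpk : |g (T (p k))| ≤ 0 := by
        simp only [mul_zero, zero_mul, sub_zero] at hkey
        exact hkey
      have hid := intdecomp (p k) B (hp1 k).1 (hp1 k).2 le_rfl
      rw [hid, hint0, add_zero]
      have habs2 : |g (T v) - N * ∫ x in Ioc v (p k), (n x)⁻¹ ∂μ| ≤
          |g (T v) - g (T (p k)) - N * ∫ x in Ioc v (p k), (n x)⁻¹ ∂μ| + |g (T (p k))| := by
        have h3 : g (T v) - N * ∫ x in Ioc v (p k), (n x)⁻¹ ∂μ =
            (g (T v) - g (T (p k)) - N * ∫ x in Ioc v (p k), (n x)⁻¹ ∂μ) + g (T (p k)) := by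
          ring
        rw [h3]; exact abs_add_le _ _
      have hcle : c ≤ 1 / k := by
        rw [hc]; exact (div_le_div_iff_of_pos_right hkR).2 hL1
      have hinvk : (0:ℝ) ≤ (n (p k))⁻¹ := (inv_pos.2 (hnpos _ (hpmem k))).le
      have hfin : N * c * ((n v)⁻¹ - (n (p k))⁻¹) ≤ N * (n v)⁻¹ / k := by
        rw [div_eq_mul_inv, mul_assoc, mul_assoc]
        have h4 : c * ((n v)⁻¹ - (n (p k))⁻¹) ≤ (n v)⁻¹ * (k:ℝ)⁻¹ := by
          have h5 : c * ((n v)⁻¹ - (n (p k))⁻¹) ≤ c * (n v)⁻¹ := by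
            nlinarith [mul_nonneg hcpos.le hinvk]
          have h6 : c * (n v)⁻¹ ≤ (1/k) * (n v)⁻¹ :=
            mul_le_mul_of_nonneg_right hcle (inv_pos.2 hnv).le
          rw [one_div] at h6
          linarith [mul_comm ((k:ℝ)⁻¹) ((n v)⁻¹)]
        exact mul_le_mul_of_nonneg_left h4 hN.le
      linarith
  -- conclude
  have hD0 : g (T v) - N * ∫ x in Ioc v B, (n x)⁻¹ ∂μ = 0 := by
    by_contra h
    have habs : 0 < |g (T v) - N * ∫ x in Ioc v B, (n x)⁻¹ ∂μ| := abs_pos.2 h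
    obtain ⟨d, hd⟩ : ∃ d : ℝ, d = |g (T v) - N * ∫ x in Ioc v B, (n x)⁻¹ ∂μ| := ⟨_, rfl⟩
    rw [← hd] at habs
    have hk_bound' : ∀ k : ℕ, 0 < k → d ≤ N * (n v)⁻¹ / k := by
      intro k hk; rw [hd]; exact hk_bound k hk
    obtain ⟨k, hk⟩ := exists_nat_gt (N * (n v)⁻¹ / d)
    have hkpos : 0 < k := by
      have : (0:ℝ) < N * (n v)⁻¹ / d := by positivity
      exact_mod_cast (Nat.cast_pos (α := ℝ)).1 (this.trans hk)
    have hb := hk_bound' k hkpos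
    have hkR : (0:ℝ) < k := by exact_mod_cast hkpos
    have hlt : N * (n v)⁻¹ / (k:ℝ) < d := by
      rw [div_lt_iff₀ hkR]
      rw [div_lt_iff₀ habs] at hk
      linarith [mul_comm d (k:ℝ)]
    linarith
  exact sub_eq_zero.mp hD0


theorem stmt3 (A B N : ℝ) (hAB : A ≤ B) (hN : 0 < N)
    (μ : Measure ℝ) [IsProbabilityMeasure μ] [NullSingletonClass μ]
    (hsupp : μ (Icc A B) = 1)
    (n g F T : ℝ → ℝ)
    (hn : StrictMonoOn n (Icc A B))
    (hnpos : ∀ v ∈ Icc A B, 0 < n v)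
    (hgmono : StrictMonoOn g (Ici 0))
    (hgcont : Continuous g)
    (hgdiff : ∀ t ∈ Ici (0:ℝ), DifferentiableAt ℝ g t)
    (hg0 : g 0 = 0)
    (hInt : IntegrableOn (fun x => (n x)⁻¹) (Icc A B) μ)
    (hTnonneg : ∀ v ∈ Icc A B, 0 ≤ T v)
    (hTanti : StrictAntiOn T (Icc A B))
    (hTdiff : ∀ v ∈ Icc A B, DifferentiableAt ℝ T v)
    (hF : ∀ t, F t = (μ {x ∈ Icc A B | t ≤ T x}).toReal)
    (hNE : ∀ v ∈ Icc A B, ∀ t, 0 ≤ t →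
      N * F (T v) + n v * g (T v) ≤ N * F t + n v * g t) :
    ∀ v ∈ Icc A B, g (T v) = N * ∫ x in Ioc v B, (n x)⁻¹ ∂μ :=
  stmt3_aux A B N hAB hN μ hsupp n g F T hn hnpos hgmono hgcont hgdiff hg0 hInt
    hTnonneg hTanti hTdiff hF hNE
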